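/- Let σ ∈ (1/2, 1). Then for every ξ with 0 < ξ ≤ 1, (1/2)·((1+ξ)^{2σ} + (1−ξ)^{2σ}) − 1 ≤ (2^{2σ−1} − 1) · ξ^{2σ}. Equivalently, the even symmetrization g(ξ) = (p₁(ξ) + p₁(−ξ))/2 satisfies g(ξ) ≤ (2^{2σ−1} − 1)|ξ|^{2σ} for 0 < |ξ| ≤ 1. -/

import Mathlib

open Real

/-- The symbol `p₁(ξ) = |ξ+1|^{2σ} − 1 − 2σξ`. -/
noncomputable def pOne (σ : ℝ) (ξ : ℝ) : ℝ := |ξ + 1| ^ (2*σ) - 1 - 2*σ*ξ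

private lemma key_ineq {s : ℝ} (hs1 : 1 < s) (hs2 : s < 2) :
    ∀ ξ : ℝ, 0 < ξ → ξ ≤ 1 →
      (1 + ξ) ^ s + (1 - ξ) ^ s - 2 ≤ ((2:ℝ) ^ s - 2) * ξ ^ s := by
  intro ξ hξ hξ1
  have hs0 : (0:ℝ) < s := by linarith
  set num : ℝ → ℝ := fun x => (1 + x) ^ s + (1 - x) ^ s - 2 with hnumdef
  set r : ℝ → ℝ := fun x => num x / x ^ s with hrdef
  have hr1 : r 1 = 2 ^ s - 2 := by
    simp only [hrdef, hnumdef]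
    norm_num [Real.zero_rpow hs0.ne', Real.one_rpow]
  have hmono : MonotoneOn r (Set.Icc ξ 1) := by
    apply monotoneOn_of_deriv_nonneg (convex_Icc ξ 1)
    · -- continuity
      apply ContinuousOn.div
      · apply ContinuousOn.sub
        apply ContinuousOn.add
        · exact (continuousOn_const.add continuousOn_id).rpow_const
            (fun x _ => Or.inr hs0.le)
        · exact (continuousOn_const.sub continuousOn_id).rpow_const
            (fun x _ => Or.inr hs0.le)
        · exact continuousOn_const
      · exact (continuousOn_id.rpow_const (fun x _ => Or.inr hs0.le))
      · intro x hx
        have hx0 : 0 < x := lt_of_lt_of_le hξ hx.1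
        exact (Real.rpow_pos_of_pos hx0 s).ne'
    · rw [interior_Icc]
      intro x hx
      have hx0 : 0 < x := lt_trans hξ hx.1
      have h1 : HasDerivAt (fun y : ℝ => (1 + y) ^ s)
          (1 * s * (1 + x) ^ (s - 1)) x :=
        ((hasDerivAt_id x).const_add 1).rpow_const (Or.inr hs1.le)
      have h2 : HasDerivAt (fun y : ℝ => (1 - y) ^ s)
          ((-1) * s * (1 - x) ^ (s - 1)) x :=
        ((hasDerivAt_id x).const_sub 1).rpow_const (Or.inr hs1.le)
      have hnum : HasDerivAt num
          (1 * s * (1 + x) ^ (s - 1) + (-1) * s * (1 - x) ^ (s - 1)) x :=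
        (h1.add h2).sub_const 2
      have hden : HasDerivAt (fun y : ℝ => y ^ s) (s * x ^ (s - 1)) x :=
        Real.hasDerivAt_rpow_const (Or.inl hx0.ne')
      have hdiv := hnum.div hden (Real.rpow_pos_of_pos hx0 s).ne'
      exact hdiv.differentiableAt.differentiableWithinAt
    · rw [interior_Icc]
      intro x hx
      have hx0 : 0 < x := lt_trans hξ hx.1
      have hx1 : x < 1 := hx.2
      have h1 : HasDerivAt (fun y : ℝ => (1 + y) ^ s)
          (1 * s * (1 + x) ^ (s - 1)) x :=
        ((hasDerivAt_id x).const_add 1).rpow_const (Or.inr hs1.le)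
      have h2 : HasDerivAt (fun y : ℝ => (1 - y) ^ s)
          ((-1) * s * (1 - x) ^ (s - 1)) x :=
        ((hasDerivAt_id x).const_sub 1).rpow_const (Or.inr hs1.le)
      have hnum : HasDerivAt num
          (1 * s * (1 + x) ^ (s - 1) + (-1) * s * (1 - x) ^ (s - 1)) x :=
        (h1.add h2).sub_const 2
      have hden : HasDerivAt (fun y : ℝ => y ^ s) (s * x ^ (s - 1)) x :=
        Real.hasDerivAt_rpow_const (Or.inl hx0.ne')
      have hdiv := hnum.div hden (Real.rpow_pos_of_pos hx0 s).ne'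
      rw [show r = (num / fun y : ℝ => y ^ s) from rfl, hdiv.deriv]
      -- rewrite the rpow's with exponent s as (s-1) products
      have e1 : (1 + x) ^ s = (1 + x) ^ (s - 1) * (1 + x) := by
        rw [← Real.rpow_add_one (by linarith : (1:ℝ) + x ≠ 0) (s - 1)]
        norm_num
      have e2 : (1 - x) ^ s = (1 - x) ^ (s - 1) * (1 - x) := by
        rw [← Real.rpow_add_one (by linarith : (1:ℝ) - x ≠ 0) (s - 1)]
        norm_num
      have e3 : x ^ s = x ^ (s - 1) * x := by
        rw [← Real.rpow_add_one hx0.ne' (s - 1)]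
        norm_num
      have hA : (1 + x) ^ (s - 1) ≤ 1 + (s - 1) * x := by
        have := rpow_one_add_le_one_add_mul_self (s := x)
          (by linarith) (p := s - 1) (by linarith) (by linarith)
        exact this
      have hB : (1 - x) ^ (s - 1) ≤ 1 + (s - 1) * (-x) := by
        have := rpow_one_add_le_one_add_mul_self (s := -x)
          (by linarith) (p := s - 1) (by linarith) (by linarith)
        calc (1 - x) ^ (s - 1) = (1 + (-x)) ^ (s - 1) := by ring_nf
          _ ≤ 1 + (s - 1) * (-x) := this
      apply div_nonneg _ (sq_nonneg _)
      have hXpos : (0:ℝ) < x ^ (s - 1) := Real.rpow_pos_of_pos hx0 _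
      simp only [hnumdef]
      rw [e1, e2, e3]
      have key : (1 * s * (1 + x) ^ (s - 1) + -1 * s * (1 - x) ^ (s - 1)) *
            (x ^ (s - 1) * x) -
          ((1 + x) ^ (s - 1) * (1 + x) + (1 - x) ^ (s - 1) * (1 - x) - 2) *
            (s * x ^ (s - 1))
          = s * x ^ (s - 1) *
            (2 - (1 + x) ^ (s - 1) - (1 - x) ^ (s - 1)) := by ring
      rw [key]
      have : (0:ℝ) ≤ 2 - (1 + x) ^ (s - 1) - (1 - x) ^ (s - 1) := by linarith
      positivity
  have hle : r ξ ≤ r 1 :=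
    hmono (Set.mem_Icc.mpr ⟨le_refl ξ, hξ1⟩) (Set.mem_Icc.mpr ⟨hξ1, le_refl 1⟩) hξ1
  rw [hr1] at hle
  have hξs : (0:ℝ) < ξ ^ s := Real.rpow_pos_of_pos hξ s
  have := (div_le_iff₀ hξs).mp hle
  simpa [hrdef, hnumdef] using this

/-- For `0 < ξ ≤ 1`, `(1/2)((1+ξ)^{2σ} + (1−ξ)^{2σ}) − 1 ≤ (2^{2σ−1} − 1)ξ^{2σ}`;
equivalently, the even part `g(ξ) = (p₁(ξ) + p₁(−ξ))/2` satisfies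
`g(ξ) ≤ (2^{2σ−1} − 1)|ξ|^{2σ}` for `0 < |ξ| ≤ 1`. -/
theorem pOne_even_part_low (σ : ℝ) (hσ : σ ∈ Set.Ioo (1/2 : ℝ) 1) :
    (∀ ξ : ℝ, 0 < ξ → ξ ≤ 1 →
      (1/2) * ((1 + ξ) ^ (2*σ) + (1 - ξ) ^ (2*σ)) - 1 ≤ ((2 : ℝ) ^ (2*σ - 1) - 1) * ξ ^ (2*σ)) ∧
    (∀ ξ : ℝ, 0 < |ξ| → |ξ| ≤ 1 →
      (pOne σ ξ + pOne σ (-ξ)) / 2 ≤ ((2 : ℝ) ^ (2*σ - 1) - 1) * |ξ| ^ (2*σ)) := by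
  obtain ⟨hσ1, hσ2⟩ := hσ
  have hs1 : 1 < 2 * σ := by linarith
  have hs2 : 2 * σ < 2 := by linarith
  have hc : (2:ℝ) ^ (2*σ - 1) = 2 ^ (2*σ) / 2 := by
    rw [Real.rpow_sub (by norm_num : (0:ℝ) < 2), Real.rpow_one]
  have part1 : ∀ ξ : ℝ, 0 < ξ → ξ ≤ 1 →
      (1/2) * ((1 + ξ) ^ (2*σ) + (1 - ξ) ^ (2*σ)) - 1 ≤
        ((2 : ℝ) ^ (2*σ - 1) - 1) * ξ ^ (2*σ) := by
    intro ξ hξ hξ1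
    have hkey := key_ineq hs1 hs2 ξ hξ hξ1
    rw [hc]
    nlinarith [hkey]
  refine ⟨part1, ?_⟩
  intro ξ h0 h1
  have hne : ξ ≠ 0 := by
    intro h; rw [h] at h0; simp at h0
  have key2 : |ξ + 1| ^ (2*σ) + |-ξ + 1| ^ (2*σ)
      = (1 + |ξ|) ^ (2*σ) + (1 - |ξ|) ^ (2*σ) := by
    rcases hne.lt_or_gt with hneg | hpos
    · have habs : |ξ| = -ξ := abs_of_neg hneg
      have hξm1 : -1 ≤ ξ := by rw [habs] at h1; linarith
      have e1 : |ξ + 1| = ξ + 1 := abs_of_nonneg (by linarith)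
      have e2 : |-ξ + 1| = -ξ + 1 := abs_of_nonneg (by linarith)
      have b1 : ξ + 1 = 1 - |ξ| := by rw [habs]; ring
      have b2 : -ξ + 1 = 1 + |ξ| := by rw [habs]; ring
      rw [e1, e2, b1, b2]; ring
    · have habs : |ξ| = ξ := abs_of_pos hpos
      have hξ1 : ξ ≤ 1 := habs ▸ h1
      have e1 : |ξ + 1| = ξ + 1 := abs_of_nonneg (by linarith)
      have e2 : |-ξ + 1| = -ξ + 1 := abs_of_nonneg (by linarith)
      have b1 : ξ + 1 = 1 + |ξ| := by rw [habs]; ring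
      have b2 : -ξ + 1 = 1 - |ξ| := by rw [habs]; ring
      rw [e1, e2, b1, b2]
  have h := part1 |ξ| h0 h1
  simp only [pOne]
  linarith [key2]
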